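/- Let $\widehat{\Sigma}, \Sigma \in \mathbb{R}^{d\times d}$ and $\lambda > 0$ with $2\|\widehat{\Sigma} - \Sigma\|_\infty \leq \lambda$. Let $\widehat{\Sigma}^\lambda$ be the minimizer of $A \mapsto \|\widehat{\Sigma} - A\|_2^2 + \lambda\|A\|_1$. Then for every matrix $A \in \mathbb{R}^{d\times d}$, $\|\widehat{\Sigma}^\lambda - \Sigma\|_2^2 \leq \|A - \Sigma\|_2^2 + 3\lambda^2 \mathrm{rank}(A)$. -/

import Mathlib

open Matrix MeasureTheory Finset

/-- Singular values of a real matrix (as square roots of the eigenvalues of `Aᴴ * A`),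
indexed by columns; not necessarily sorted. -/
noncomputable def sval {m q : ℕ} (A : Matrix (Fin m) (Fin q) ℝ) (k : Fin q) : ℝ :=
  Real.sqrt ((Matrix.isHermitian_conjTranspose_mul_self A).eigenvalues k)

/-- Nuclear (Schatten-1) norm: sum of singular values. -/
noncomputable def nucNorm {m q : ℕ} (A : Matrix (Fin m) (Fin q) ℝ) : ℝ :=
  ∑ k, sval A k

/-- Frobenius (Schatten-2) norm. -/
noncomputable def frobNorm {m q : ℕ} (A : Matrix (Fin m) (Fin q) ℝ) : ℝ :=
  Real.sqrt (Matrix.trace (Aᴴ * A))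

/-- Spectral norm: largest singular value. -/
noncomputable def specNorm {m q : ℕ} (A : Matrix (Fin m) (Fin q) ℝ) : ℝ :=
  ⨆ k, sval A k

/-- `rankAt A ε`: number of singular values of `A` that are `≥ ε`. -/
noncomputable def rankAt {m q : ℕ} (A : Matrix (Fin m) (Fin q) ℝ) (ε : ℝ) : ℕ :=
  Nat.card {k : Fin q // ε ≤ sval A k}

/-- `svalOrd A k`: the `(k+1)`-th largest singular value of `A`. -/
noncomputable def svalOrd {m q : ℕ} (A : Matrix (Fin m) (Fin q) ℝ) (k : Fin q) : ℝ :=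
  sSup {t : ℝ | (k : ℕ) + 1 ≤ rankAt A t}

namespace OracleAux
variable {d : ℕ}

noncomputable def eU (N : Matrix (Fin d) (Fin d) ℝ) : Matrix (Fin d) (Fin d) ℝ :=
  ↑((Matrix.isHermitian_conjTranspose_mul_self N).eigenvectorUnitary)

noncomputable def eig (N : Matrix (Fin d) (Fin d) ℝ) : Fin d → ℝ :=
  (Matrix.isHermitian_conjTranspose_mul_self N).eigenvalues

lemma eig_nonneg (N : Matrix (Fin d) (Fin d) ℝ) (k : Fin d) : 0 ≤ eig N k :=
  Matrix.eigenvalues_conjTranspose_mul_self_nonneg N k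

lemma sval_eq (N : Matrix (Fin d) (Fin d) ℝ) (k : Fin d) : sval N k = Real.sqrt (eig N k) := rfl

lemma sval_nonneg (N : Matrix (Fin d) (Fin d) ℝ) (k : Fin d) : 0 ≤ sval N k := Real.sqrt_nonneg _

lemma sval_sq (N : Matrix (Fin d) (Fin d) ℝ) (k : Fin d) : sval N k ^ 2 = eig N k := by
  rw [sval_eq, Real.sq_sqrt (eig_nonneg N k)]

lemma t_mul_eU (N : Matrix (Fin d) (Fin d) ℝ) : (eU N)ᵀ * eU N = 1 := by
  have h := ((Matrix.isHermitian_conjTranspose_mul_self N).eigenvectorUnitary).2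
  rw [Matrix.mem_unitaryGroup_iff'] at h
  simpa [eU, Matrix.star_eq_conjTranspose, Matrix.conjTranspose_eq_transpose_of_trivial] using h

lemma eU_mul_t (N : Matrix (Fin d) (Fin d) ℝ) : eU N * (eU N)ᵀ = 1 := by
  have h := ((Matrix.isHermitian_conjTranspose_mul_self N).eigenvectorUnitary).2
  rw [Matrix.mem_unitaryGroup_iff] at h
  simpa [eU, Matrix.star_eq_conjTranspose, Matrix.conjTranspose_eq_transpose_of_trivial] using h

lemma diag_form (N : Matrix (Fin d) (Fin d) ℝ) :
    (eU N)ᵀ * (Nᵀ * N) * eU N = Matrix.diagonal (eig N) := by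
  have h := (Matrix.isHermitian_conjTranspose_mul_self N).conjStarAlgAut_star_eigenvectorUnitary
  simpa [eU, eig, Matrix.star_eq_conjTranspose, Matrix.conjTranspose_eq_transpose_of_trivial,
    RCLike.ofReal_real_eq_id, Unitary.conjStarAlgAut_apply, Matrix.mul_assoc] using h

lemma NtN_eU (N : Matrix (Fin d) (Fin d) ℝ) :
    (Nᵀ * N) * eU N = eU N * Matrix.diagonal (eig N) := by
  have := congrArg (fun X => eU N * X) (diag_form N)
  simpa [← Matrix.mul_assoc, eU_mul_t N] using this

lemma spec_decomp (N : Matrix (Fin d) (Fin d) ℝ) :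
    Nᵀ * N = eU N * Matrix.diagonal (eig N) * (eU N)ᵀ := by
  have := congrArg (fun X => X * (eU N)ᵀ) (NtN_eU N)
  simpa [Matrix.mul_assoc, eU_mul_t N] using this

/-- Cauchy-Schwarz for finite sums over ℝ. -/
lemma cs_sum (s : Finset (Fin d)) (f g : Fin d → ℝ) :
    ∑ i ∈ s, f i * g i ≤ Real.sqrt (∑ i ∈ s, f i ^ 2) * Real.sqrt (∑ i ∈ s, g i ^ 2) := by
  have h := Finset.sum_mul_sq_le_sq_mul_sq s f g
  calc ∑ i ∈ s, f i * g i ≤ |∑ i ∈ s, f i * g i| := le_abs_self _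
    _ = Real.sqrt ((∑ i ∈ s, f i * g i) ^ 2) := (Real.sqrt_sq_eq_abs _).symm
    _ ≤ Real.sqrt ((∑ i ∈ s, f i ^ 2) * ∑ i ∈ s, g i ^ 2) := Real.sqrt_le_sqrt h
    _ = _ := Real.sqrt_mul (by positivity) _

lemma sval_le_spec (N : Matrix (Fin d) (Fin d) ℝ) (k : Fin d) : sval N k ≤ specNorm N :=
  le_ciSup (Set.Finite.bddAbove (Set.finite_range _)) k

lemma spec_nonneg (N : Matrix (Fin d) (Fin d) ℝ) : 0 ≤ specNorm N :=
  Real.iSup_nonneg (sval_nonneg N)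

lemma eig_le_sq_spec (N : Matrix (Fin d) (Fin d) ℝ) (k : Fin d) :
    eig N k ≤ specNorm N ^ 2 := by
  rw [← sval_sq]
  exact pow_le_pow_left₀ (sval_nonneg N k) (sval_le_spec N k) 2

/-- diagonal entries of `Wᵀ (diagonal a) W`. -/
lemma diag_entry_quad (a : Fin d → ℝ) (W : Matrix (Fin d) (Fin d) ℝ) (k : Fin d) :
    (Wᵀ * (Matrix.diagonal a * W)) k k = ∑ l, a l * W l k ^ 2 := by
  simp [Matrix.mul_apply, Matrix.diagonal_apply, Finset.sum_ite_eq, sq]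
  ring_nf
  refine Finset.sum_congr rfl fun l _ => by ring

lemma diag_entry_sq (W : Matrix (Fin d) (Fin d) ℝ) (k : Fin d) :
    (Wᵀ * W) k k = ∑ l, W l k ^ 2 := by
  simp [Matrix.mul_apply, sq]

/-- Key quadratic-form bound: `(Vᵀ (XᵀX) V)ₖₖ ≤ ‖X‖∞² (VᵀV)ₖₖ`. -/
lemma quad_diag_le (X V : Matrix (Fin d) (Fin d) ℝ) (k : Fin d) :
    (Vᵀ * (Xᵀ * X) * V) k k ≤ specNorm X ^ 2 * (Vᵀ * V) k k := by
  set U := eU X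
  have hdec : Vᵀ * (Xᵀ * X) * V = (Uᵀ * V)ᵀ * (Matrix.diagonal (eig X) * (Uᵀ * V)) := by
    rw [spec_decomp X]
    simp only [Matrix.transpose_mul, Matrix.transpose_transpose]
    noncomm_ring
  have hVV : (Vᵀ * V) k k = ((Uᵀ * V)ᵀ * (Uᵀ * V)) k k := by
    have : (Uᵀ * V)ᵀ * (Uᵀ * V) = Vᵀ * V := by
      simp only [Matrix.transpose_mul, Matrix.transpose_transpose]
      rw [Matrix.mul_assoc, ← Matrix.mul_assoc U, eU_mul_t X, Matrix.one_mul]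
    rw [this]
  rw [hdec, hVV, diag_entry_quad, diag_entry_sq, Finset.mul_sum]
  refine Finset.sum_le_sum fun l _ => ?_
  exact mul_le_mul_of_nonneg_right (eig_le_sq_spec X l) (sq_nonneg _)

/-- Trace duality: `tr(Xᵀ Y) ≤ ‖X‖∞ ‖Y‖₁`. -/
lemma trace_le_spec_mul_nuc (X Y : Matrix (Fin d) (Fin d) ℝ) :
    Matrix.trace (Xᵀ * Y) ≤ specNorm X * nucNorm Y := by
  set U := eU Y with hU
  have h1 : Matrix.trace (Uᵀ * (Xᵀ * Y) * U) = Matrix.trace (Xᵀ * Y) := by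
    rw [Matrix.trace_mul_comm (Uᵀ * (Xᵀ * Y)) U, ← Matrix.mul_assoc, ← Matrix.mul_assoc,
      eU_mul_t Y, Matrix.one_mul]
  rw [← h1]
  have h2 : Uᵀ * (Xᵀ * Y) * U = (X * U)ᵀ * (Y * U) := by
    simp only [Matrix.transpose_mul]; noncomm_ring
  rw [h2, Matrix.trace]
  have hbound : ∀ k : Fin d, ((X * U)ᵀ * (Y * U)).diag k ≤ specNorm X * sval Y k := by
    intro k
    have hentry : ((X * U)ᵀ * (Y * U)).diag k = ∑ i, (X * U) i k * (Y * U) i k := by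
      rw [Matrix.diag_apply, Matrix.mul_apply]
      exact Finset.sum_congr rfl fun i _ => by rw [Matrix.transpose_apply]
    rw [hentry]
    have hcs := cs_sum Finset.univ (fun i => (X * U) i k) (fun i => (Y * U) i k)
    have hY : ∑ i, (Y * U) i k ^ 2 = eig Y k := by
      have e1 : (Y * U)ᵀ * (Y * U) = Uᵀ * (Yᵀ * Y) * U := by
        simp only [Matrix.transpose_mul]; noncomm_ring
      have e2 := diag_entry_sq (Y * U) k
      rw [e1, diag_form Y, Matrix.diagonal_apply_eq] at e2
      exact e2.symm
    have hX : ∑ i, (X * U) i k ^ 2 ≤ specNorm X ^ 2 := by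
      have e1 : (X * U)ᵀ * (X * U) = Uᵀ * (Xᵀ * X) * U := by
        simp only [Matrix.transpose_mul]; noncomm_ring
      have e2 := diag_entry_sq (X * U) k
      rw [e1] at e2
      have e3 := quad_diag_le X U k
      rw [t_mul_eU Y, Matrix.one_apply_eq, mul_one] at e3
      rw [← e2]; exact e3
    have hsX : Real.sqrt (∑ i, (X * U) i k ^ 2) ≤ specNorm X := by
      calc Real.sqrt (∑ i, (X * U) i k ^ 2) ≤ Real.sqrt (specNorm X ^ 2) :=
            Real.sqrt_le_sqrt hX
        _ = specNorm X := Real.sqrt_sq (spec_nonneg X)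
    calc ∑ i, (X * U) i k * (Y * U) i k
        ≤ Real.sqrt (∑ i, (X * U) i k ^ 2) * Real.sqrt (∑ i, (Y * U) i k ^ 2) := hcs
      _ = Real.sqrt (∑ i, (X * U) i k ^ 2) * sval Y k := by rw [hY]; rfl
      _ ≤ specNorm X * sval Y k :=
          mul_le_mul_of_nonneg_right hsX (sval_nonneg Y k)
  calc ∑ k, ((X * U)ᵀ * (Y * U)).diag k ≤ ∑ k, specNorm X * sval Y k :=
        Finset.sum_le_sum fun k _ => hbound k
    _ = specNorm X * nucNorm Y := by rw [← Finset.mul_sum]; rfl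


/-! ### Dm calculus -/

noncomputable def Dm (N : Matrix (Fin d) (Fin d) ℝ) (a : Fin d → ℝ) : Matrix (Fin d) (Fin d) ℝ :=
  eU N * Matrix.diagonal a * (eU N)ᵀ

lemma Dm_mul_Dm (N : Matrix (Fin d) (Fin d) ℝ) (a b : Fin d → ℝ) :
    Dm N a * Dm N b = Dm N (fun k => a k * b k) := by
  unfold Dm
  have : Matrix.diagonal a * ((eU N)ᵀ * (eU N * Matrix.diagonal b)) =
      Matrix.diagonal (fun k => a k * b k) := by
    rw [← Matrix.mul_assoc ((eU N)ᵀ) (eU N) (Matrix.diagonal b), t_mul_eU, Matrix.one_mul,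
      Matrix.diagonal_mul_diagonal]
  calc eU N * Matrix.diagonal a * (eU N)ᵀ * (eU N * Matrix.diagonal b * (eU N)ᵀ)
      = eU N * (Matrix.diagonal a * ((eU N)ᵀ * (eU N * Matrix.diagonal b))) * (eU N)ᵀ := by
        simp only [Matrix.mul_assoc]
    _ = _ := by rw [this]

lemma Dm_transpose (N : Matrix (Fin d) (Fin d) ℝ) (a : Fin d → ℝ) : (Dm N a)ᵀ = Dm N a := by
  unfold Dm
  simp [Matrix.transpose_mul, Matrix.mul_assoc]

lemma Dm_one (N : Matrix (Fin d) (Fin d) ℝ) : Dm N (fun _ => 1) = 1 := by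
  unfold Dm
  rw [show (Matrix.diagonal (fun _ => (1:ℝ)) : Matrix (Fin d) (Fin d) ℝ) = 1 from Matrix.diagonal_one,
    Matrix.mul_one, eU_mul_t]

lemma Dm_sub (N : Matrix (Fin d) (Fin d) ℝ) (a b : Fin d → ℝ) :
    Dm N (fun k => a k - b k) = Dm N a - Dm N b := by
  unfold Dm
  rw [show Matrix.diagonal (fun k => a k - b k) = Matrix.diagonal a - Matrix.diagonal b from
    (Matrix.diagonal_sub a b).symm, Matrix.mul_sub, Matrix.sub_mul]

lemma NtN_eq_Dm (N : Matrix (Fin d) (Fin d) ℝ) : Nᵀ * N = Dm N (eig N) := spec_decomp N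

lemma trace_Dm (N : Matrix (Fin d) (Fin d) ℝ) (a : Fin d → ℝ) :
    Matrix.trace (Dm N a) = ∑ k, a k := by
  unfold Dm
  rw [Matrix.trace_mul_comm, ← Matrix.mul_assoc, t_mul_eU, Matrix.one_mul, Matrix.trace_diagonal]

/-! ### pointwise functions -/

noncomputable def gfun (N : Matrix (Fin d) (Fin d) ℝ) : Fin d → ℝ :=
  fun k => if eig N k = 0 then 0 else (sval N k)⁻¹

noncomputable def chi (N : Matrix (Fin d) (Fin d) ℝ) : Fin d → ℝ :=
  fun k => if eig N k = 0 then 0 else 1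

lemma sqrt_ne_zero_of (N : Matrix (Fin d) (Fin d) ℝ) {k : Fin d} (h : eig N k ≠ 0) :
    sval N k ≠ 0 := by
  rw [sval_eq]
  exact fun hc => h ((Real.sqrt_eq_zero (eig_nonneg N k)).mp hc)

lemma sq_sval (N : Matrix (Fin d) (Fin d) ℝ) (k : Fin d) : sval N k * sval N k = eig N k := by
  have := sval_sq N k; nlinarith [this]

lemma pw_gg_e (N : Matrix (Fin d) (Fin d) ℝ) (k : Fin d) :
    gfun N k * eig N k * gfun N k = chi N k := by
  unfold gfun chi
  by_cases h : eig N k = 0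
  · simp [h]
  · have hs := sq_sval N k
    have hne := sqrt_ne_zero_of N h
    simp only [h, if_false]
    field_simp
    nlinarith [hs]

lemma pw_g_e (N : Matrix (Fin d) (Fin d) ℝ) (k : Fin d) :
    gfun N k * eig N k = sval N k := by
  unfold gfun
  by_cases h : eig N k = 0
  · simp [h, sval_eq, Real.sqrt_zero]
  · have hs := sq_sval N k
    have hne := sqrt_ne_zero_of N h
    simp only [h, if_false]
    field_simp
    nlinarith [hs]


lemma pw_chi_g (N : Matrix (Fin d) (Fin d) ℝ) (k : Fin d) :
    chi N k * gfun N k = gfun N k := by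
  unfold gfun chi; by_cases h : eig N k = 0 <;> simp [h]

lemma pw_chi_chi (N : Matrix (Fin d) (Fin d) ℝ) (k : Fin d) :
    chi N k * chi N k = chi N k := by
  unfold chi; by_cases h : eig N k = 0 <;> simp [h]

lemma pw_ggg_e (N : Matrix (Fin d) (Fin d) ℝ) (k : Fin d) :
    gfun N k * gfun N k * gfun N k * eig N k = gfun N k := by
  have h1 := pw_gg_e N k
  have h2 := pw_chi_g N k
  calc gfun N k * gfun N k * gfun N k * eig N k
      = (gfun N k * eig N k * gfun N k) * gfun N k := by ring
    _ = chi N k * gfun N k := by rw [h1]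
    _ = gfun N k := h2

/-! ### the dual witness -/

noncomputable def dualG (N : Matrix (Fin d) (Fin d) ℝ) : Matrix (Fin d) (Fin d) ℝ :=
  N * Dm N (gfun N)

/-- Factorization `dualG N = N * C * (Nᵀ * N)` used for annihilation arguments. -/
lemma dualG_factor (N : Matrix (Fin d) (Fin d) ℝ) :
    dualG N = N * (Dm N (fun k => gfun N k * gfun N k * gfun N k) * (Nᵀ * N)) := by
  rw [NtN_eq_Dm, Dm_mul_Dm]
  unfold dualG
  have hfe : (fun k => gfun N k * gfun N k * gfun N k * eig N k) = gfun N :=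
    funext (pw_ggg_e N)
  rw [hfe]

lemma dualG_transpose_mul_self (N : Matrix (Fin d) (Fin d) ℝ) :
    (dualG N)ᵀ * dualG N = Dm N (chi N) := by
  unfold dualG
  rw [Matrix.transpose_mul, Dm_transpose, Matrix.mul_assoc, ← Matrix.mul_assoc Nᵀ N,
    NtN_eq_Dm, ← Matrix.mul_assoc, Dm_mul_Dm, Dm_mul_Dm]
  have hfe : (fun k => gfun N k * eig N k * gfun N k) = chi N := funext (pw_gg_e N)
  rw [hfe]

lemma trace_dualG_mul (N : Matrix (Fin d) (Fin d) ℝ) :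
    Matrix.trace ((dualG N)ᵀ * N) = nucNorm N := by
  unfold dualG
  rw [Matrix.transpose_mul, Dm_transpose, Matrix.mul_assoc, NtN_eq_Dm, Dm_mul_Dm]
  rw [show (fun k => gfun N k * eig N k) = sval N from funext (pw_g_e N), trace_Dm]
  rfl

lemma nuc_nonneg (N : Matrix (Fin d) (Fin d) ℝ) : 0 ≤ nucNorm N :=
  Finset.sum_nonneg fun k _ => sval_nonneg N k

lemma psd_t_mul (R : Matrix (Fin d) (Fin d) ℝ) : Matrix.PosSemidef (Rᵀ * R) := by
  simpa [Matrix.conjTranspose_eq_transpose_of_trivial] using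
    Matrix.posSemidef_conjTranspose_mul_self R

/-- spectral norm bound from a PSD certificate. -/
lemma spec_le_of_psd {X : Matrix (Fin d) (Fin d) ℝ} {c : ℝ} (hc : 0 ≤ c)
    (h : Matrix.PosSemidef (c ^ 2 • (1 : Matrix (Fin d) (Fin d) ℝ) - Xᵀ * X)) :
    specNorm X ≤ c := by
  have heig : ∀ k, eig X k ≤ c ^ 2 := by
    intro k
    have h2 := h.conjTranspose_mul_mul_same (eU X)
    rw [Matrix.conjTranspose_eq_transpose_of_trivial] at h2
    have hexp : (eU X)ᵀ * (c ^ 2 • (1 : Matrix (Fin d) (Fin d) ℝ) - Xᵀ * X) * eU X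
        = c ^ 2 • (1 : Matrix (Fin d) (Fin d) ℝ) - Matrix.diagonal (eig X) := by
      rw [Matrix.mul_sub, Matrix.sub_mul, diag_form, Matrix.mul_smul, Matrix.smul_mul,
        Matrix.mul_one, t_mul_eU]
    rw [hexp] at h2
    have hkk := h2.dotProduct_mulVec_nonneg (Pi.single k 1)
    simp only [star_trivial] at hkk
    have : dotProduct (Pi.single k 1)
        ((c ^ 2 • (1 : Matrix (Fin d) (Fin d) ℝ) - Matrix.diagonal (eig X)) *ᵥ Pi.single k 1)
        = c ^ 2 - eig X k := by
      rw [Matrix.mulVec_single, single_dotProduct]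
      simp [Matrix.sub_apply, Matrix.smul_apply, Matrix.one_apply_eq, Matrix.diagonal_apply_eq]
    rw [this] at hkk
    linarith
  refine Real.iSup_le (fun k => ?_) hc
  rw [sval_eq]
  calc Real.sqrt (eig X k) ≤ Real.sqrt (c ^ 2) := Real.sqrt_le_sqrt (heig k)
    _ = c := Real.sqrt_sq hc

lemma spec_dualG_le_one (N : Matrix (Fin d) (Fin d) ℝ) : specNorm (dualG N) ≤ 1 := by
  apply spec_le_of_psd (by norm_num)
  rw [dualG_transpose_mul_self]
  have hR : (1 : ℝ) ^ 2 • (1 : Matrix (Fin d) (Fin d) ℝ) - Dm N (chi N)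
      = (Dm N (fun k => 1 - chi N k))ᵀ * Dm N (fun k => 1 - chi N k) := by
    rw [Dm_transpose, Dm_mul_Dm]
    have : (fun k => (1 - chi N k) * (1 - chi N k)) = fun k => 1 - chi N k := by
      funext k
      have := pw_chi_chi N k
      ring_nf
      nlinarith [this]
    rw [this, Dm_sub (N := N) (a := fun _ => 1) (b := chi N), Dm_one]
    norm_num
  rw [hR]
  exact psd_t_mul _


lemma trace_t_le_nuc {X Y : Matrix (Fin d) (Fin d) ℝ} (hX : specNorm X ≤ 1) :
    Matrix.trace (Xᵀ * Y) ≤ nucNorm Y :=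
  le_trans (trace_le_spec_mul_nuc X Y) (mul_le_of_le_one_left (nuc_nonneg Y) hX)

lemma nuc_add_le (X Y : Matrix (Fin d) (Fin d) ℝ) :
    nucNorm (X + Y) ≤ nucNorm X + nucNorm Y := by
  have h := trace_dualG_mul (X + Y)
  rw [Matrix.mul_add, Matrix.trace_add] at h
  have h1 := trace_t_le_nuc (Y := X) (spec_dualG_le_one (X + Y))
  have h2 := trace_t_le_nuc (Y := Y) (spec_dualG_le_one (X + Y))
  linarith

lemma tr_symm (X Y : Matrix (Fin d) (Fin d) ℝ) :
    Matrix.trace (Xᵀ * Y) = Matrix.trace (Yᵀ * X) := by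
  conv_rhs => rw [← Matrix.trace_transpose]
  simp [Matrix.transpose_mul]

lemma tr_sq_nonneg (X : Matrix (Fin d) (Fin d) ℝ) : 0 ≤ Matrix.trace (Xᵀ * X) := by
  rw [Matrix.trace]
  refine Finset.sum_nonneg fun k _ => ?_
  rw [Matrix.diag_apply, diag_entry_sq]
  positivity

lemma frob_eq (X : Matrix (Fin d) (Fin d) ℝ) :
    frobNorm X = Real.sqrt (Matrix.trace (Xᵀ * X)) := by
  unfold frobNorm
  rw [Matrix.conjTranspose_eq_transpose_of_trivial]

lemma frob_sq (X : Matrix (Fin d) (Fin d) ℝ) :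
    frobNorm X ^ 2 = Matrix.trace (Xᵀ * X) := by
  rw [frob_eq, Real.sq_sqrt (tr_sq_nonneg X)]

lemma frob_nonneg (X : Matrix (Fin d) (Fin d) ℝ) : 0 ≤ frobNorm X := by
  rw [frob_eq]; exact Real.sqrt_nonneg _

lemma trace_NtN (X : Matrix (Fin d) (Fin d) ℝ) :
    Matrix.trace (Xᵀ * X) = ∑ k, eig X k := by
  rw [NtN_eq_Dm, trace_Dm]

lemma rank_eq_card (X : Matrix (Fin d) (Fin d) ℝ) :
    X.rank = Fintype.card {k // eig X k ≠ 0} := by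
  have h1 := (Matrix.isHermitian_conjTranspose_mul_self X).rank_eq_card_non_zero_eigs
  have h2 : (Xᴴ * X).rank = X.rank := by
    rw [Matrix.conjTranspose_eq_transpose_of_trivial, Matrix.rank_transpose_mul_self]
  rw [← h2, h1]
  rfl

lemma nuc_le_sqrt_rank_mul_frob (X : Matrix (Fin d) (Fin d) ℝ) :
    nucNorm X ≤ Real.sqrt (X.rank : ℝ) * frobNorm X := by
  classical
  set S : Finset (Fin d) := Finset.univ.filter (fun k => eig X k ≠ 0) with hS
  have hnuc : nucNorm X = ∑ k ∈ S, sval X k := by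
    unfold nucNorm
    refine (Finset.sum_subset (Finset.filter_subset _ _) fun k _ hk => ?_).symm
    rw [Finset.mem_filter] at hk
    push_neg at hk
    have : eig X k = 0 := hk (Finset.mem_univ k)
    rw [sval_eq, this, Real.sqrt_zero]
  have hcs : ∑ k ∈ S, sval X k ≤
      Real.sqrt (∑ k ∈ S, (1:ℝ) ^ 2) * Real.sqrt (∑ k ∈ S, sval X k ^ 2) := by
    have := cs_sum S (fun _ => (1:ℝ)) (sval X)
    simpa using this
  have hcard : ∑ k ∈ S, (1:ℝ) ^ 2 = (X.rank : ℝ) := by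
    rw [rank_eq_card X, Fintype.card_subtype]
    simp [hS]
  have hsum : ∑ k ∈ S, sval X k ^ 2 ≤ Matrix.trace (Xᵀ * X) := by
    rw [trace_NtN]
    calc ∑ k ∈ S, sval X k ^ 2 = ∑ k ∈ S, eig X k := by
          refine Finset.sum_congr rfl fun k _ => sval_sq X k
      _ ≤ ∑ k, eig X k :=
          Finset.sum_le_sum_of_subset_of_nonneg (Finset.subset_univ _)
            (fun k _ _ => eig_nonneg X k)
  calc nucNorm X = ∑ k ∈ S, sval X k := hnuc
    _ ≤ Real.sqrt (∑ k ∈ S, (1:ℝ) ^ 2) * Real.sqrt (∑ k ∈ S, sval X k ^ 2) := hcs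
    _ ≤ Real.sqrt (X.rank : ℝ) * frobNorm X := by
        rw [hcard, frob_eq]
        exact mul_le_mul_of_nonneg_left (Real.sqrt_le_sqrt hsum) (Real.sqrt_nonneg _)


/-! ### projections attached to a matrix A -/

lemma Dm_zero (N : Matrix (Fin d) (Fin d) ℝ) : Dm N (fun _ => 0) = 0 := by
  unfold Dm
  rw [show (Matrix.diagonal (fun _ => (0:ℝ)) : Matrix (Fin d) (Fin d) ℝ) = 0 from
    Matrix.diagonal_zero, Matrix.mul_zero, Matrix.zero_mul]

noncomputable def PrA (A : Matrix (Fin d) (Fin d) ℝ) : Matrix (Fin d) (Fin d) ℝ :=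
  Dm A (chi A)

noncomputable def PcA (A : Matrix (Fin d) (Fin d) ℝ) : Matrix (Fin d) (Fin d) ℝ :=
  A * Dm A (fun k => gfun A k * gfun A k) * Aᵀ

noncomputable def Np (A M : Matrix (Fin d) (Fin d) ℝ) : Matrix (Fin d) (Fin d) ℝ :=
  (1 - PcA A) * M * (1 - PrA A)

lemma A_mul_PrA (A : Matrix (Fin d) (Fin d) ℝ) : A * PrA A = A := by
  have hz : A * Dm A (fun k => 1 - chi A k) = 0 := by
    rw [← Matrix.conjTranspose_mul_self_eq_zero (A := A * Dm A (fun k => 1 - chi A k)),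
      Matrix.conjTranspose_eq_transpose_of_trivial, Matrix.transpose_mul, Dm_transpose,
      Matrix.mul_assoc, ← Matrix.mul_assoc Aᵀ A, NtN_eq_Dm, ← Matrix.mul_assoc,
      Dm_mul_Dm, Dm_mul_Dm]
    have : (fun k => (1 - chi A k) * eig A k * (1 - chi A k)) = fun _ => 0 := by
      funext k
      unfold chi
      by_cases h : eig A k = 0 <;> simp [h]
    rw [this, Dm_zero]
  have hsub := Dm_sub A (fun _ => 1) (chi A)
  have h1 : A * (Dm A (fun _ => 1) - Dm A (chi A)) = 0 := by rw [← hsub]; exact hz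
  rw [Matrix.mul_sub, Dm_one, Matrix.mul_one, sub_eq_zero] at h1
  exact h1.symm

lemma PrA_t (A : Matrix (Fin d) (Fin d) ℝ) : (PrA A)ᵀ = PrA A := Dm_transpose A _

lemma PcA_t (A : Matrix (Fin d) (Fin d) ℝ) : (PcA A)ᵀ = PcA A := by
  unfold PcA
  rw [Matrix.transpose_mul, Matrix.transpose_mul, Dm_transpose, Matrix.transpose_transpose,
    Matrix.mul_assoc]

lemma PcA_mul_A (A : Matrix (Fin d) (Fin d) ℝ) : PcA A * A = A := by
  have hfe : (fun k => (gfun A k * gfun A k) * eig A k) = chi A := by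
    funext k
    have := pw_gg_e A k
    nlinarith [this]
  calc PcA A * A = A * (Dm A (fun k => gfun A k * gfun A k) * (Aᵀ * A)) := by
        unfold PcA; simp only [Matrix.mul_assoc]
    _ = A * Dm A (chi A) := by rw [NtN_eq_Dm, Dm_mul_Dm, hfe]
    _ = A := A_mul_PrA A

lemma At_mul_PcA (A : Matrix (Fin d) (Fin d) ℝ) : Aᵀ * PcA A = Aᵀ := by
  have h := congrArg Matrix.transpose (PcA_mul_A A)
  rw [Matrix.transpose_mul, PcA_t] at h
  exact h

lemma PrA_idem (A : Matrix (Fin d) (Fin d) ℝ) : PrA A * PrA A = PrA A := by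
  unfold PrA
  rw [Dm_mul_Dm]
  exact congrArg (Dm A) (funext (pw_chi_chi A))

lemma PcA_idem (A : Matrix (Fin d) (Fin d) ℝ) : PcA A * PcA A = PcA A := by
  conv_lhs => rw [show PcA A * PcA A = PcA A * A * (Dm A (fun k => gfun A k * gfun A k) * Aᵀ) by
    unfold PcA; noncomm_ring]
  rw [PcA_mul_A, ← Matrix.mul_assoc]
  rfl

lemma Np_mul_PrA (A M : Matrix (Fin d) (Fin d) ℝ) : Np A M * PrA A = 0 := by
  have h1 : (1 - PrA A) * PrA A = 0 := by
    rw [Matrix.sub_mul, Matrix.one_mul, PrA_idem, sub_self]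
  calc Np A M * PrA A = ((1 - PcA A) * M) * ((1 - PrA A) * PrA A) := by
        unfold Np; simp only [Matrix.mul_assoc]
    _ = 0 := by rw [h1, Matrix.mul_zero]

lemma PcA_mul_Np (A M : Matrix (Fin d) (Fin d) ℝ) : PcA A * Np A M = 0 := by
  have h1 : PcA A * (1 - PcA A) = 0 := by
    rw [Matrix.mul_sub, Matrix.mul_one, PcA_idem, sub_self]
  calc PcA A * Np A M = (PcA A * (1 - PcA A)) * (M * (1 - PrA A)) := by
        unfold Np; simp only [Matrix.mul_assoc]
    _ = 0 := by rw [h1, Matrix.zero_mul]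

lemma At_mul_Np (A M : Matrix (Fin d) (Fin d) ℝ) : Aᵀ * Np A M = 0 := by
  have h1 : Aᵀ * (1 - PcA A) = 0 := by
    rw [Matrix.mul_sub, Matrix.mul_one, At_mul_PcA, sub_self]
  calc Aᵀ * Np A M = (Aᵀ * (1 - PcA A)) * (M * (1 - PrA A)) := by
        unfold Np; simp only [Matrix.mul_assoc]
    _ = 0 := by rw [h1, Matrix.zero_mul]

lemma Npt_mul_A (A M : Matrix (Fin d) (Fin d) ℝ) : (Np A M)ᵀ * A = 0 := by
  have h := congrArg Matrix.transpose (At_mul_Np A M)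
  rw [Matrix.transpose_mul, Matrix.transpose_transpose, Matrix.transpose_zero] at h
  exact h

lemma Npt_mul_PcA (A M : Matrix (Fin d) (Fin d) ℝ) : (Np A M)ᵀ * PcA A = 0 := by
  have h := congrArg Matrix.transpose (PcA_mul_Np A M)
  rw [Matrix.transpose_mul, PcA_t, Matrix.transpose_zero] at h
  exact h

/-! ### annihilation lemmas for `dualG` -/

lemma dualG_t_mul_eq_zero {X Y : Matrix (Fin d) (Fin d) ℝ} (h : Xᵀ * Y = 0) :
    (dualG X)ᵀ * Y = 0 := by
  unfold dualG
  rw [Matrix.transpose_mul, Dm_transpose, Matrix.mul_assoc, h, Matrix.mul_zero]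

lemma mul_dualG_eq_zero {X Y : Matrix (Fin d) (Fin d) ℝ} (h : Y * X = 0) :
    Y * dualG X = 0 := by
  unfold dualG
  rw [← Matrix.mul_assoc, h, Matrix.zero_mul]

lemma dualG_mul_eq_zero {X Y : Matrix (Fin d) (Fin d) ℝ} (h : X * Y = 0) :
    dualG X * Y = 0 := by
  rw [dualG_factor, Matrix.mul_assoc, Matrix.mul_assoc, Matrix.mul_assoc, h, Matrix.mul_zero,
    Matrix.mul_zero, Matrix.mul_zero]


/-! ### expansion lemmas -/

lemma expand_sq (X Y : Matrix (Fin d) (Fin d) ℝ) :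
    Matrix.trace ((X + Y)ᵀ * (X + Y)) =
      Matrix.trace (Xᵀ * X) + 2 * Matrix.trace (Xᵀ * Y) + Matrix.trace (Yᵀ * Y) := by
  have h := tr_symm Y X
  simp only [Matrix.transpose_add, Matrix.add_mul, Matrix.mul_add, Matrix.trace_add]
  linarith

lemma expand_sub (X Y : Matrix (Fin d) (Fin d) ℝ) :
    Matrix.trace ((X - Y)ᵀ * (X - Y)) =
      Matrix.trace (Xᵀ * X) - 2 * Matrix.trace (Xᵀ * Y) + Matrix.trace (Yᵀ * Y) := by
  have h := tr_symm Y X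
  simp only [Matrix.transpose_sub, Matrix.sub_mul, Matrix.mul_sub, Matrix.trace_sub]
  linarith

lemma expand_smul (X Y : Matrix (Fin d) (Fin d) ℝ) (c : ℝ) :
    Matrix.trace ((X + c • Y)ᵀ * (X + c • Y)) =
      Matrix.trace (Xᵀ * X) + 2 * c * Matrix.trace (Xᵀ * Y)
        + c ^ 2 * Matrix.trace (Yᵀ * Y) := by
  have h := tr_symm Y X
  simp only [Matrix.transpose_add, Matrix.transpose_smul, Matrix.add_mul, Matrix.mul_add,
    Matrix.smul_mul, Matrix.mul_smul, Matrix.trace_add, Matrix.trace_smul, smul_smul,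
    smul_eq_mul]
  rw [h]; ring

/-! ### spectral bounds for the dual witnesses -/

lemma psd_one_sub_Dm_chi (N : Matrix (Fin d) (Fin d) ℝ) :
    Matrix.PosSemidef ((1:ℝ) ^ 2 • (1 : Matrix (Fin d) (Fin d) ℝ) - Dm N (chi N)) := by
  have hR : (1 : ℝ) ^ 2 • (1 : Matrix (Fin d) (Fin d) ℝ) - Dm N (chi N)
      = (Dm N (fun k => 1 - chi N k))ᵀ * Dm N (fun k => 1 - chi N k) := by
    rw [Dm_transpose, Dm_mul_Dm]
    have : (fun k => (1 - chi N k) * (1 - chi N k)) = fun k => 1 - chi N k := by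
      funext k
      have := pw_chi_chi N k
      ring_nf
      nlinarith [this]
    rw [this, Dm_sub (N := N) (a := fun _ => 1) (b := chi N), Dm_one]
    norm_num
  rw [hR]
  exact psd_t_mul _

lemma spec_neg_dualG_le_one (N : Matrix (Fin d) (Fin d) ℝ) :
    specNorm (-(dualG N)) ≤ 1 := by
  apply spec_le_of_psd (by norm_num)
  have h : (-(dualG N))ᵀ * (-(dualG N)) = Dm N (chi N) := by
    rw [Matrix.transpose_neg, Matrix.neg_mul, Matrix.mul_neg, neg_neg,
      dualG_transpose_mul_self]
  rw [h]
  exact psd_one_sub_Dm_chi N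

lemma spec_G_le_one (A M : Matrix (Fin d) (Fin d) ℝ) :
    specNorm (dualG A + dualG (Np A M)) ≤ 1 := by
  have h12 : (dualG A)ᵀ * dualG (Np A M) = 0 :=
    dualG_t_mul_eq_zero (mul_dualG_eq_zero (At_mul_Np A M))
  have h21 : (dualG (Np A M))ᵀ * dualG A = 0 := by
    have h := congrArg Matrix.transpose h12
    rw [Matrix.transpose_mul, Matrix.transpose_transpose, Matrix.transpose_zero] at h
    exact h
  have hGtG : (dualG A + dualG (Np A M))ᵀ * (dualG A + dualG (Np A M))
      = PrA A + Dm (Np A M) (chi (Np A M)) := by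
    rw [Matrix.transpose_add, Matrix.add_mul, Matrix.mul_add, Matrix.mul_add, h12, h21,
      dualG_transpose_mul_self, dualG_transpose_mul_self]
    unfold PrA
    abel
  have hG2Pr : dualG (Np A M) * PrA A = 0 := dualG_mul_eq_zero (Np_mul_PrA A M)
  have hPG2t : PrA A * (dualG (Np A M))ᵀ = 0 := by
    have h := congrArg Matrix.transpose hG2Pr
    rw [Matrix.transpose_mul, PrA_t, Matrix.transpose_zero] at h
    exact h
  have hPQ : PrA A * Dm (Np A M) (chi (Np A M)) = 0 := by
    rw [← dualG_transpose_mul_self, ← Matrix.mul_assoc, hPG2t, Matrix.zero_mul]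
  have hQP : Dm (Np A M) (chi (Np A M)) * PrA A = 0 := by
    have h := congrArg Matrix.transpose hPQ
    rw [Matrix.transpose_mul, PrA_t, Dm_transpose, Matrix.transpose_zero] at h
    exact h
  have hPP : PrA A * PrA A = PrA A := PrA_idem A
  have hQQ : Dm (Np A M) (chi (Np A M)) * Dm (Np A M) (chi (Np A M))
      = Dm (Np A M) (chi (Np A M)) := by
    rw [Dm_mul_Dm]
    exact congrArg (Dm (Np A M)) (funext (pw_chi_chi (Np A M)))
  apply spec_le_of_psd (by norm_num)
  rw [hGtG]
  set P := PrA A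
  set Q := Dm (Np A M) (chi (Np A M))
  have hRt : (1 - P - Q)ᵀ = 1 - P - Q := by
    simp only [Matrix.transpose_sub, Matrix.transpose_one]
    rw [PrA_t, Dm_transpose]
  have hexpand : (1 - P - Q) * (1 - P - Q)
      = 1 - P - Q - P + P * P + P * Q - Q + Q * P + Q * Q := by noncomm_ring
  have hRR : (1 - P - Q) * (1 - P - Q) = 1 - P - Q := by
    rw [hexpand, hPP, hQQ, hPQ, hQP]
    abel
  have hfin : (1:ℝ) ^ 2 • (1 : Matrix (Fin d) (Fin d) ℝ) - (P + Q)
      = (1 - P - Q)ᵀ * (1 - P - Q) := by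
    rw [hRt, hRR, one_pow, one_smul]
    abel
  rw [hfin]
  exact psd_t_mul _

/-! ### trace identities -/

lemma hPc_one_sub (A : Matrix (Fin d) (Fin d) ℝ) : PcA A * (1 - PcA A) = 0 := by
  rw [Matrix.mul_sub, Matrix.mul_one, PcA_idem, sub_self]

lemma PM_dec (A M : Matrix (Fin d) (Fin d) ℝ) :
    M - Np A M = PcA A * M + (1 - PcA A) * M * PrA A := by
  unfold Np
  noncomm_ring

lemma tr_G2t_PM (A M : Matrix (Fin d) (Fin d) ℝ) :
    Matrix.trace ((dualG (Np A M))ᵀ * (M - Np A M)) = 0 := by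
  rw [PM_dec, Matrix.mul_add, Matrix.trace_add]
  have h1 : (dualG (Np A M))ᵀ * (PcA A * M) = 0 := by
    rw [← Matrix.mul_assoc, dualG_t_mul_eq_zero (Npt_mul_PcA A M), Matrix.zero_mul]
  have hPG2t : PrA A * (dualG (Np A M))ᵀ = 0 := by
    have h := congrArg Matrix.transpose (dualG_mul_eq_zero (Np_mul_PrA A M))
    rw [Matrix.transpose_mul, PrA_t, Matrix.transpose_zero] at h
    exact h
  have h2 : (dualG (Np A M))ᵀ * ((1 - PcA A) * M * PrA A)
      = ((dualG (Np A M))ᵀ * ((1 - PcA A) * M)) * PrA A := by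
    simp only [Matrix.mul_assoc]
  rw [h1, Matrix.trace_zero, h2, Matrix.trace_mul_comm, ← Matrix.mul_assoc, hPG2t,
    Matrix.zero_mul, Matrix.trace_zero, add_zero]

lemma tr_PMt_Np (A M : Matrix (Fin d) (Fin d) ℝ) :
    Matrix.trace ((M - Np A M)ᵀ * Np A M) = 0 := by
  rw [PM_dec, Matrix.transpose_add, Matrix.add_mul, Matrix.trace_add]
  have h1 : (PcA A * M)ᵀ * Np A M = 0 := by
    rw [Matrix.transpose_mul, PcA_t, Matrix.mul_assoc, PcA_mul_Np, Matrix.mul_zero]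
  have h2 : Matrix.trace (((1 - PcA A) * M * PrA A)ᵀ * Np A M) = 0 := by
    have ht : ((1 - PcA A) * M * PrA A)ᵀ = PrA A * ((1 - PcA A) * M)ᵀ := by
      rw [Matrix.transpose_mul, PrA_t]
    rw [ht, Matrix.mul_assoc, Matrix.trace_mul_comm, Matrix.mul_assoc, Np_mul_PrA,
      Matrix.mul_zero, Matrix.trace_zero]
  rw [h1, Matrix.trace_zero, h2, add_zero]

lemma tr_cross_zero (A M : Matrix (Fin d) (Fin d) ℝ) :
    Matrix.trace ((PcA A * M)ᵀ * ((1 - PcA A) * M * PrA A)) = 0 := by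
  have h : (PcA A * M)ᵀ * ((1 - PcA A) * M * PrA A)
      = Mᵀ * ((PcA A * (1 - PcA A)) * (M * PrA A)) := by
    rw [Matrix.transpose_mul, ← PcA_t]
    simp only [Matrix.mul_assoc, PcA_t]
  rw [h, hPc_one_sub, Matrix.zero_mul, Matrix.mul_zero, Matrix.trace_zero]

/-! ### rank bounds -/

lemma rank_PrA_le (A : Matrix (Fin d) (Fin d) ℝ) : (PrA A).rank ≤ A.rank := by
  unfold PrA Dm
  calc (eU A * Matrix.diagonal (chi A) * (eU A)ᵀ).rank
      ≤ (eU A * Matrix.diagonal (chi A)).rank := Matrix.rank_mul_le_left _ _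
    _ ≤ (Matrix.diagonal (chi A)).rank := Matrix.rank_mul_le_right _ _
    _ = Fintype.card {i // chi A i ≠ 0} := Matrix.rank_diagonal _
    _ = Fintype.card {i // eig A i ≠ 0} := Fintype.card_congr (Equiv.subtypeEquivRight
        (fun k => by unfold chi; by_cases h : eig A k = 0 <;> simp [h]))
    _ = A.rank := (rank_eq_card A).symm

lemma rank_PcA_le (A : Matrix (Fin d) (Fin d) ℝ) : (PcA A).rank ≤ A.rank := by
  unfold PcA
  calc (A * Dm A (fun k => gfun A k * gfun A k) * Aᵀ).rank
      ≤ (A * Dm A (fun k => gfun A k * gfun A k)).rank := Matrix.rank_mul_le_left _ _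
    _ ≤ A.rank := Matrix.rank_mul_le_left _ _

end OracleAux

set_option maxHeartbeats 2000000 in
open OracleAux in
/-- Oracle inequality for the penalized estimator: rank bound. -/
theorem oracle_inequality_rank {d : ℕ}
    (Shat Sig Slam : Matrix (Fin d) (Fin d) ℝ) (lam : ℝ) (hlam : 0 < lam)
    (hclose : 2 * specNorm (Shat - Sig) ≤ lam)
    (hmin : ∀ B : Matrix (Fin d) (Fin d) ℝ,
        frobNorm (Shat - Slam) ^ 2 + lam * nucNorm Slam
          ≤ frobNorm (Shat - B) ^ 2 + lam * nucNorm B) :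
    ∀ A : Matrix (Fin d) (Fin d) ℝ,
      frobNorm (Slam - Sig) ^ 2 ≤ frobNorm (A - Sig) ^ 2 + 3 * lam ^ 2 * (A.rank : ℝ) := by
  intro A
  have hE2 : specNorm (Shat - Sig) ≤ lam / 2 := by linarith
  -- Step 1: use minimality at B = Slam - (1/3)(Slam - A)
  have hcore : lam * nucNorm Slam - lam * nucNorm A ≤
      2 * Matrix.trace ((Shat - Slam)ᵀ * (Slam - A))
        + (1/3) * Matrix.trace ((Slam - A)ᵀ * (Slam - A)) := by
    have hB := hmin (Slam - (3:ℝ)⁻¹ • (Slam - A))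
    have hSB : Shat - (Slam - (3:ℝ)⁻¹ • (Slam - A))
        = (Shat - Slam) + (3:ℝ)⁻¹ • (Slam - A) := by module
    have hfrob1 : frobNorm (Shat - (Slam - (3:ℝ)⁻¹ • (Slam - A))) ^ 2
        = Matrix.trace ((Shat - Slam)ᵀ * (Shat - Slam))
          + 2 * (3:ℝ)⁻¹ * Matrix.trace ((Shat - Slam)ᵀ * (Slam - A))
          + ((3:ℝ)⁻¹) ^ 2 * Matrix.trace ((Slam - A)ᵀ * (Slam - A)) := by
      rw [frob_sq, hSB, expand_smul]
    have hfrob0 : frobNorm (Shat - Slam) ^ 2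
        = Matrix.trace ((Shat - Slam)ᵀ * (Shat - Slam)) := frob_sq _
    have hnucB : nucNorm (Slam - (3:ℝ)⁻¹ • (Slam - A))
        ≤ (1 - (3:ℝ)⁻¹) * nucNorm Slam + (3:ℝ)⁻¹ * nucNorm A := by
      have hattain := trace_dualG_mul (Slam - (3:ℝ)⁻¹ • (Slam - A))
      have hdec : (dualG (Slam - (3:ℝ)⁻¹ • (Slam - A)))ᵀ * (Slam - (3:ℝ)⁻¹ • (Slam - A))
          = (dualG (Slam - (3:ℝ)⁻¹ • (Slam - A)))ᵀ * Slam
            - (3:ℝ)⁻¹ • ((dualG (Slam - (3:ℝ)⁻¹ • (Slam - A)))ᵀ * Slam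
              - (dualG (Slam - (3:ℝ)⁻¹ • (Slam - A)))ᵀ * A) := by
        rw [Matrix.mul_sub, Matrix.mul_smul, Matrix.mul_sub]
      have h1 : Matrix.trace ((dualG (Slam - (3:ℝ)⁻¹ • (Slam - A)))ᵀ * Slam)
          ≤ nucNorm Slam := trace_t_le_nuc (spec_dualG_le_one _)
      have h2 : Matrix.trace ((dualG (Slam - (3:ℝ)⁻¹ • (Slam - A)))ᵀ * A)
          ≤ nucNorm A := trace_t_le_nuc (spec_dualG_le_one _)
      rw [← hattain, hdec, Matrix.trace_sub, Matrix.trace_smul, Matrix.trace_sub, smul_eq_mul]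
      linarith
    have hlB := mul_le_mul_of_nonneg_left hnucB hlam.le
    rw [hfrob0, hfrob1] at hB
    nlinarith [hB, hlB]
  -- rewrite the inner product pieces
  have hFM : Matrix.trace ((Shat - Slam)ᵀ * (Slam - A))
      = Matrix.trace ((Shat - Sig)ᵀ * (Slam - A))
        - Matrix.trace ((Slam - Sig)ᵀ * (Slam - A)) := by
    have h : Shat - Slam = (Shat - Sig) - (Slam - Sig) := by module
    rw [h, Matrix.transpose_sub, Matrix.sub_mul, Matrix.trace_sub]
  have hDM : 2 * Matrix.trace ((Slam - Sig)ᵀ * (Slam - A))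
      = Matrix.trace ((Slam - Sig)ᵀ * (Slam - Sig))
        + Matrix.trace ((Slam - A)ᵀ * (Slam - A))
        - Matrix.trace ((A - Sig)ᵀ * (A - Sig)) := by
    have h := expand_sub (Slam - Sig) (Slam - A)
    have h2 : (Slam - Sig) - (Slam - A) = A - Sig := by module
    rw [h2] at h
    linarith
  -- duality / subgradient step
  have hsplit : (Slam - A) = ((Slam - A) - Np A (Slam - A)) + Np A (Slam - A) := by module
  have hval : nucNorm A
      + Matrix.trace ((dualG A)ᵀ * ((Slam - A) - Np A (Slam - A)))
      + nucNorm (Np A (Slam - A)) ≤ nucNorm Slam := by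
    have htr := trace_t_le_nuc (Y := Slam) (spec_G_le_one A (Slam - A))
    have hexp : Matrix.trace ((dualG A + dualG (Np A (Slam - A)))ᵀ * Slam)
        = Matrix.trace ((dualG A)ᵀ * A)
          + Matrix.trace ((dualG (Np A (Slam - A)))ᵀ * A)
          + Matrix.trace ((dualG A)ᵀ * (Slam - A))
          + Matrix.trace ((dualG (Np A (Slam - A)))ᵀ * (Slam - A)) := by
      have hm : (dualG A + dualG (Np A (Slam - A)))ᵀ * Slam
          = (dualG A)ᵀ * A + (dualG (Np A (Slam - A)))ᵀ * A
            + (dualG A)ᵀ * (Slam - A) + (dualG (Np A (Slam - A)))ᵀ * (Slam - A) := by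
        rw [Matrix.transpose_add]
        noncomm_ring
      rw [hm, Matrix.trace_add, Matrix.trace_add, Matrix.trace_add]
    have e1 : Matrix.trace ((dualG A)ᵀ * A) = nucNorm A := trace_dualG_mul A
    have e2 : Matrix.trace ((dualG (Np A (Slam - A)))ᵀ * A) = 0 := by
      rw [dualG_t_mul_eq_zero (Npt_mul_A A (Slam - A)), Matrix.trace_zero]
    have e3 : Matrix.trace ((dualG A)ᵀ * (Slam - A))
        = Matrix.trace ((dualG A)ᵀ * ((Slam - A) - Np A (Slam - A))) := by
      have hm : (dualG A)ᵀ * (Slam - A)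
          = (dualG A)ᵀ * ((Slam - A) - Np A (Slam - A)) + (dualG A)ᵀ * Np A (Slam - A) := by
        noncomm_ring
      rw [hm, Matrix.trace_add,
        dualG_t_mul_eq_zero (At_mul_Np A (Slam - A)), Matrix.trace_zero, add_zero]
    have e4 : Matrix.trace ((dualG (Np A (Slam - A)))ᵀ * (Slam - A))
        = nucNorm (Np A (Slam - A)) := by
      have hm : (dualG (Np A (Slam - A)))ᵀ * (Slam - A)
          = (dualG (Np A (Slam - A)))ᵀ * ((Slam - A) - Np A (Slam - A))
            + (dualG (Np A (Slam - A)))ᵀ * Np A (Slam - A) := by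
        noncomm_ring
      rw [hm, Matrix.trace_add, tr_G2t_PM, trace_dualG_mul, zero_add]
    rw [hexp, e1, e2, e3, e4] at htr
    linarith
  -- bounds on trace pieces
  have hEPM : Matrix.trace ((Shat - Sig)ᵀ * ((Slam - A) - Np A (Slam - A)))
      ≤ (lam/2) * nucNorm ((Slam - A) - Np A (Slam - A)) :=
    le_trans (trace_le_spec_mul_nuc _ _) (mul_le_mul_of_nonneg_right hE2 (nuc_nonneg _))
  have hENp : Matrix.trace ((Shat - Sig)ᵀ * Np A (Slam - A))
      ≤ (lam/2) * nucNorm (Np A (Slam - A)) :=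
    le_trans (trace_le_spec_mul_nuc _ _) (mul_le_mul_of_nonneg_right hE2 (nuc_nonneg _))
  have hEM : Matrix.trace ((Shat - Sig)ᵀ * (Slam - A))
      = Matrix.trace ((Shat - Sig)ᵀ * ((Slam - A) - Np A (Slam - A)))
        + Matrix.trace ((Shat - Sig)ᵀ * Np A (Slam - A)) := by
    have hm : (Shat - Sig)ᵀ * (Slam - A)
        = (Shat - Sig)ᵀ * ((Slam - A) - Np A (Slam - A))
          + (Shat - Sig)ᵀ * Np A (Slam - A) := by
      noncomm_ring
    rw [hm, Matrix.trace_add]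
  have hnegG1 : -Matrix.trace ((dualG A)ᵀ * ((Slam - A) - Np A (Slam - A)))
      ≤ nucNorm ((Slam - A) - Np A (Slam - A)) := by
    have h := trace_t_le_nuc (Y := (Slam - A) - Np A (Slam - A)) (spec_neg_dualG_le_one A)
    rw [Matrix.transpose_neg, Matrix.neg_mul, Matrix.trace_neg] at h
    linarith
  -- nuclear norm of the low-rank part
  have hrank1 : ((PcA A * (Slam - A)).rank : ℝ) ≤ (A.rank : ℝ) :=
    Nat.cast_le.mpr ((Matrix.rank_mul_le_left _ _).trans (rank_PcA_le A))
  have hrank2 : (((1 - PcA A) * (Slam - A) * PrA A).rank : ℝ) ≤ (A.rank : ℝ) :=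
    Nat.cast_le.mpr ((Matrix.rank_mul_le_right _ _).trans (rank_PrA_le A))
  have hnucPM : nucNorm ((Slam - A) - Np A (Slam - A))
      ≤ Real.sqrt (A.rank : ℝ) * frobNorm (PcA A * (Slam - A))
        + Real.sqrt (A.rank : ℝ) * frobNorm ((1 - PcA A) * (Slam - A) * PrA A) := by
    calc nucNorm ((Slam - A) - Np A (Slam - A))
        = nucNorm (PcA A * (Slam - A) + (1 - PcA A) * (Slam - A) * PrA A) := by
          rw [PM_dec]
      _ ≤ nucNorm (PcA A * (Slam - A)) + nucNorm ((1 - PcA A) * (Slam - A) * PrA A) :=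
          nuc_add_le _ _
      _ ≤ _ := by
          refine add_le_add ?_ ?_
          · exact le_trans (nuc_le_sqrt_rank_mul_frob _)
              (mul_le_mul_of_nonneg_right (Real.sqrt_le_sqrt hrank1) (frob_nonneg _))
          · exact le_trans (nuc_le_sqrt_rank_mul_frob _)
              (mul_le_mul_of_nonneg_right (Real.sqrt_le_sqrt hrank2) (frob_nonneg _))
  -- frobenius relations
  have hPMfrob : Matrix.trace (((Slam - A) - Np A (Slam - A))ᵀ * ((Slam - A) - Np A (Slam - A)))
      = frobNorm (PcA A * (Slam - A)) ^ 2
        + frobNorm ((1 - PcA A) * (Slam - A) * PrA A) ^ 2 := by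
    have h := expand_sq (PcA A * (Slam - A)) ((1 - PcA A) * (Slam - A) * PrA A)
    rw [← PM_dec, tr_cross_zero] at h
    rw [h, frob_sq, frob_sq]
    ring
  have hmm : Matrix.trace ((Slam - A)ᵀ * (Slam - A))
      = Matrix.trace (((Slam - A) - Np A (Slam - A))ᵀ * ((Slam - A) - Np A (Slam - A)))
        + Matrix.trace ((Np A (Slam - A))ᵀ * Np A (Slam - A)) := by
    have h := expand_sq ((Slam - A) - Np A (Slam - A)) (Np A (Slam - A))
    rw [← hsplit, tr_PMt_Np] at h
    rw [h]
    ring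
  have hNpnn : 0 ≤ Matrix.trace ((Np A (Slam - A))ᵀ * Np A (Slam - A)) := tr_sq_nonneg _
  -- assemble
  have step2 := mul_le_mul_of_nonneg_left hval hlam.le
  have step3 := mul_le_mul_of_nonneg_left hnegG1 hlam.le
  have step5 := mul_le_mul_of_nonneg_left hnucPM hlam.le
  have hs : Real.sqrt (A.rank : ℝ) ^ 2 = (A.rank : ℝ) := Real.sq_sqrt (Nat.cast_nonneg _)
  have hs0 : 0 ≤ Real.sqrt (A.rank : ℝ) := Real.sqrt_nonneg _
  have ha0 : 0 ≤ frobNorm (PcA A * (Slam - A)) := frob_nonneg _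
  have hb0 : 0 ≤ frobNorm ((1 - PcA A) * (Slam - A) * PrA A) := frob_nonneg _
  rw [frob_sq, frob_sq]
  nlinarith [hcore, hFM, hDM, step2, step3, step5, hEPM, hENp, hEM, hPMfrob, hmm, hNpnn, hs,
    hlam.le, sq_nonneg (2 * frobNorm (PcA A * (Slam - A)) - 3 * lam * Real.sqrt (A.rank : ℝ)),
    sq_nonneg (2 * frobNorm ((1 - PcA A) * (Slam - A) * PrA A)
      - 3 * lam * Real.sqrt (A.rank : ℝ))]
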